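/- Let n be a positive integer with distinct prime factors p_1,...,p_s, and let ζ be a primitive n-th root of unity. For an integer m, the sum of ζ^{m·c} over all c in [1,n] coprime to n (i.e., the Ramanujan sum c_n(m)) equals 0 if (n/rad(n)) ∤ m, and equals (-1)^{s - ω(d)} · (n/rad(n)) · φ(rad(d)) if (n/rad(n)) | m, where d = gcd(m/(n/rad(n)), n). -/

import Mathlib

open Finset

/-- The radical of a natural number: the product of its distinct prime factors. -/
def radical (n : ℕ) : ℕ := ∏ p ∈ n.primeFactors, p


lemma radical_dvd_self (n : ℕ) : radical n ∣ n := Nat.prod_primeFactors_dvd n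

lemma squarefree_prod_primes : ∀ (s : Finset ℕ), (∀ p ∈ s, p.Prime) → Squarefree (∏ p ∈ s, p) := by
  intro s
  induction s using Finset.induction_on with
  | empty => intro _; simpa using squarefree_one
  | @insert a s ha ih =>
    intro hs
    rw [Finset.prod_insert ha, Nat.squarefree_mul_iff]
    refine ⟨?_, (hs a (mem_insert_self a s)).squarefree,
      ih fun p hp => hs p (mem_insert_of_mem hp)⟩
    apply Nat.Coprime.prod_right
    intro p hp
    exact (Nat.coprime_primes (hs a (mem_insert_self a s)) (hs p (mem_insert_of_mem hp))).mpr
      (fun h => ha (h ▸ hp))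

lemma squarefree_radical (n : ℕ) : Squarefree (radical n) :=
  squarefree_prod_primes _ fun _ hp => Nat.prime_of_mem_primeFactors hp

lemma primeFactors_radical (n : ℕ) : (radical n).primeFactors = n.primeFactors :=
  Nat.primeFactors_prod fun _ hp => Nat.prime_of_mem_primeFactors hp

lemma geom_sum_Icc {w : ℂ} {N : ℕ} (hw : w ^ N = 1) :
    ∑ k ∈ Icc 1 N, w ^ k = if w = 1 then (N : ℂ) else 0 := by
  split_ifs with h
  · subst h; simp
  · have h0 : ∑ k ∈ Finset.range N, w ^ k = 0 := by
      rw [geom_sum_eq h N, hw, sub_self, zero_div]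
    calc ∑ k ∈ Icc 1 N, w ^ k = ∑ k ∈ Finset.range N, w ^ (1 + k) := by
          rw [← Finset.Ico_add_one_right_eq_Icc, Finset.sum_Ico_eq_sum_range]
          simp
      _ = w * ∑ k ∈ Finset.range N, w ^ k := by
          rw [Finset.mul_sum]
          exact Finset.sum_congr rfl fun k _ => by rw [pow_add, pow_one]
      _ = 0 := by rw [h0, mul_zero]

open ArithmeticFunction ArithmeticFunction.Moebius in
lemma sum_moebius_div_mul (r : ℕ) (hr : 0 < r) :
    ∑ f ∈ r.divisors, (μ (r / f) : ℤ) * f = Nat.totient r := by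
  have h := (sum_eq_iff_sum_smul_moebius_eq (R := ℤ)
      (f := fun x => (Nat.totient x : ℤ)) (g := fun x => (x : ℤ))).mp ?_ r hr
  · rw [← h, ← Nat.sum_divisorsAntidiagonal' (f := fun a b => (μ a : ℤ) * b)]
    exact Finset.sum_congr rfl fun x _ => by push_cast [smul_eq_mul]; ring
  · intro k hk
    exact_mod_cast Nat.sum_totient k

open ArithmeticFunction ArithmeticFunction.Moebius in
lemma sum_moebius_divisors (k : ℕ) :
    ∑ i ∈ k.divisors, (μ i : ℤ) = if k = 1 then 1 else 0 := by
  have := congrArg (fun f : ArithmeticFunction ℤ => f k) moebius_mul_coe_zeta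
  simpa only [coe_mul_zeta_apply, one_apply] using this

lemma div_radical_dvd {n e : ℕ} (hn : n ≠ 0) (he : e ∣ n) (hsq : Squarefree (n / e)) :
    n / radical n ∣ e := by
  have ht : radical n ∣ n := radical_dvd_self n
  have htpos : 0 < radical n :=
    Finset.prod_pos fun p hp => (Nat.prime_of_mem_primeFactors hp).pos
  have hepos : e ≠ 0 := fun h => hn (by simpa [h] using he)
  have hne : n / e ≠ 0 := Nat.div_ne_zero_iff.mpr ⟨hepos, Nat.le_of_dvd (Nat.pos_of_ne_zero hn) he⟩
  have hmain : n ∣ e * radical n := by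
    rw [← Nat.factorization_le_iff_dvd hn (by positivity), Finsupp.le_def]
    intro p
    rw [Nat.factorization_mul hepos htpos.ne']
    simp only [Finsupp.coe_add, Pi.add_apply]
    by_cases hpn : p ∈ n.primeFactors
    · have h1 : (n / e).factorization p ≤ 1 :=
        (Nat.squarefree_iff_factorization_le_one hne).mp hsq p
      rw [Nat.factorization_div he] at h1
      simp only [Finsupp.tsub_apply] at h1
      have h2 : 1 ≤ (radical n).factorization p := by
        have hd : p ∣ radical n := Finset.dvd_prod_of_mem _ hpn
        exact (Nat.Prime.factorization_pos_of_dvd (Nat.prime_of_mem_primeFactors hpn)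
          htpos.ne' hd)
      omega
    · have h0 : n.factorization p = 0 := by
        rw [← Nat.support_factorization] at hpn
        exact Finsupp.notMem_support_iff.mp hpn
      omega
  have : n / radical n * radical n ∣ e * radical n := by
    rw [Nat.div_mul_cancel ht]; exact hmain
  exact (Nat.mul_dvd_mul_iff_right htpos).mp this


lemma rs_inner_sum (n : ℕ) (hn : 0 < n) (ζ : ℂ) (hζ : IsPrimitiveRoot ζ n) (m : ℤ)
    (d : ℕ) (hd : d ∈ n.divisors) :
    ∑ c ∈ (Icc 1 n).filter (fun c => d ∣ c), ζ ^ (m * (c : ℤ))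
      = if ((n / d : ℕ) : ℤ) ∣ m then ((n / d : ℕ) : ℂ) else 0 := by
  obtain ⟨hdvd, hn0⟩ := Nat.mem_divisors.mp hd
  have hdpos : 0 < d := Nat.pos_of_dvd_of_pos hdvd hn
  have hbij : ∑ c ∈ (Icc 1 n).filter (fun c => d ∣ c), ζ ^ (m * (c : ℤ))
      = ∑ k ∈ Icc 1 (n / d), (ζ ^ (m * (d : ℤ))) ^ k := by
    refine Finset.sum_bij' (fun c _ => c / d) (fun k _ => d * k) ?_ ?_ ?_ ?_ ?_
    · intro c hc
      obtain ⟨hc1, hc2⟩ := Finset.mem_filter.mp hc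
      obtain ⟨hc1a, hc1b⟩ := Finset.mem_Icc.mp hc1
      refine Finset.mem_Icc.mpr ⟨?_, Nat.div_le_div_right hc1b⟩
      exact (Nat.one_le_div_iff hdpos).mpr (Nat.le_of_dvd (by omega) hc2)
    · intro k hk
      obtain ⟨hk1, hk2⟩ := Finset.mem_Icc.mp hk
      refine Finset.mem_filter.mpr ⟨Finset.mem_Icc.mpr ⟨Nat.one_le_iff_ne_zero.mpr (by positivity), ?_⟩, Dvd.intro k rfl⟩
      calc d * k ≤ d * (n / d) := Nat.mul_le_mul_left d hk2
        _ = n := Nat.mul_div_cancel' hdvd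
    · intro c hc
      exact Nat.mul_div_cancel' (Finset.mem_filter.mp hc).2
    · intro k hk
      exact Nat.mul_div_cancel_left k hdpos
    · intro c hc
      have hdc : d ∣ c := (Finset.mem_filter.mp hc).2
      rw [← zpow_natCast (ζ ^ (m * (d : ℤ))), ← zpow_mul]
      congr 1
      have : ((c / d : ℕ) : ℤ) * d = (c : ℤ) := by exact_mod_cast Nat.div_mul_cancel hdc
      rw [mul_assoc, mul_comm (d : ℤ), this]
  rw [hbij, geom_sum_Icc ?_]
  · have hd0 : (d : ℤ) ≠ 0 := Int.natCast_ne_zero.mpr hdpos.ne'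
    have hnd : ((n / d : ℕ) : ℤ) * d = (n : ℤ) := by exact_mod_cast Nat.div_mul_cancel hdvd
    have hiff : ζ ^ (m * (d : ℤ)) = 1 ↔ ((n / d : ℕ) : ℤ) ∣ m := by
      rw [hζ.zpow_eq_one_iff_dvd, ← hnd, mul_dvd_mul_iff_right hd0]
    rw [if_congr hiff rfl rfl]
  · rw [← zpow_natCast, ← zpow_mul]
    have h1 : (d : ℤ) * ((n / d : ℕ) : ℤ) = (n : ℤ) := by exact_mod_cast Nat.mul_div_cancel' hdvd
    have h2 : m * (d : ℤ) * ((n / d : ℕ) : ℤ) = (n : ℤ) * m := by rw [mul_assoc, h1]; ring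
    rw [h2, zpow_mul, zpow_natCast, hζ.pow_eq_one, one_zpow]

lemma step1 (n : ℕ) (hn : 0 < n) (ζ : ℂ) (hζ : IsPrimitiveRoot ζ n) (m : ℤ) :
    ∑ c ∈ (Icc 1 n).filter (fun c => Nat.Coprime c n), ζ ^ (m * (c : ℤ))
      = ∑ e ∈ n.divisors.filter (fun e => ((e : ℕ) : ℤ) ∣ m),
          ((ArithmeticFunction.moebius (n / e) : ℤ) : ℂ) * e := by
  have hmu : ∀ c : ℕ, (if Nat.Coprime c n then (1 : ℂ) else 0)
      = ∑ d ∈ n.divisors.filter (fun d => d ∣ c), ((ArithmeticFunction.moebius d : ℤ) : ℂ) := by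
    intro c
    have h1 : n.divisors.filter (fun d => d ∣ c) = (Nat.gcd c n).divisors := by
      ext x
      simp only [Nat.mem_divisors, Finset.mem_filter, Nat.dvd_gcd_iff]
      constructor
      · rintro ⟨⟨hxn, hne⟩, hxc⟩
        exact ⟨⟨hxc, hxn⟩, Nat.gcd_ne_zero_right hn.ne'⟩
      · rintro ⟨⟨hxc, hxn⟩, _⟩
        exact ⟨⟨hxn, hn.ne'⟩, hxc⟩
    rw [h1]
    have h2 := sum_moebius_divisors (Nat.gcd c n)
    have h3 : ((∑ i ∈ (Nat.gcd c n).divisors, (ArithmeticFunction.moebius i : ℤ) : ℤ) : ℂ)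
        = ∑ i ∈ (Nat.gcd c n).divisors, ((ArithmeticFunction.moebius i : ℤ) : ℂ) := by
      push_cast; rfl
    rw [← h3, h2]
    by_cases h : Nat.Coprime c n
    · rw [if_pos h, if_pos h]; simp
    · rw [if_neg h, if_neg h]; simp
  calc ∑ c ∈ (Icc 1 n).filter (fun c => Nat.Coprime c n), ζ ^ (m * (c : ℤ))
      = ∑ c ∈ Icc 1 n, (if Nat.Coprime c n then (1 : ℂ) else 0) * ζ ^ (m * (c : ℤ)) := by
        rw [Finset.sum_filter]
        exact Finset.sum_congr rfl fun c _ => by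
          by_cases h : Nat.Coprime c n <;> simp [h]
    _ = ∑ c ∈ Icc 1 n, ∑ d ∈ n.divisors,
          (if d ∣ c then ((ArithmeticFunction.moebius d : ℤ) : ℂ) * ζ ^ (m * (c : ℤ)) else 0) := by
        refine Finset.sum_congr rfl fun c _ => ?_
        rw [hmu c, Finset.sum_mul, ← Finset.sum_filter]
    _ = ∑ d ∈ n.divisors, ∑ c ∈ Icc 1 n,
          (if d ∣ c then ((ArithmeticFunction.moebius d : ℤ) : ℂ) * ζ ^ (m * (c : ℤ)) else 0) :=
        Finset.sum_comm
    _ = ∑ d ∈ n.divisors, ((ArithmeticFunction.moebius d : ℤ) : ℂ)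
          * (if ((n / d : ℕ) : ℤ) ∣ m then ((n / d : ℕ) : ℂ) else 0) := by
        refine Finset.sum_congr rfl fun d hd => ?_
        rw [← rs_inner_sum n hn ζ hζ m d hd, ← Finset.sum_filter, Finset.mul_sum]
    _ = ∑ d ∈ n.divisors, (fun e => ((ArithmeticFunction.moebius (n / e) : ℤ) : ℂ)
          * (if ((e : ℕ) : ℤ) ∣ m then (e : ℂ) else 0)) (n / d) := by
        refine Finset.sum_congr rfl fun d hd => ?_
        obtain ⟨hdvd, _⟩ := Nat.mem_divisors.mp hd
        simp only [Nat.div_div_self hdvd hn.ne']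
    _ = ∑ e ∈ n.divisors, ((ArithmeticFunction.moebius (n / e) : ℤ) : ℂ)
          * (if ((e : ℕ) : ℤ) ∣ m then (e : ℂ) else 0) := Nat.sum_div_divisors n (fun e => ((ArithmeticFunction.moebius (n / e) : ℤ) : ℂ) * (if ((e : ℕ) : ℤ) ∣ m then (e : ℂ) else 0))
    _ = ∑ e ∈ n.divisors.filter (fun e => ((e : ℕ) : ℤ) ∣ m),
          ((ArithmeticFunction.moebius (n / e) : ℤ) : ℂ) * e := by
        rw [Finset.sum_filter]
        exact Finset.sum_congr rfl fun e _ => by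
          by_cases h : ((e : ℕ) : ℤ) ∣ m <;> simp [h]

lemma step2 (n : ℕ) (hn : 0 < n) (m : ℤ) :
    ∑ e ∈ n.divisors.filter (fun e => ((e : ℕ) : ℤ) ∣ m),
        ((ArithmeticFunction.moebius (n / e) : ℤ) : ℂ) * e
      = ∑ f ∈ (radical n).divisors.filter
            (fun f => (((n / radical n) * f : ℕ) : ℤ) ∣ m),
          ((ArithmeticFunction.moebius (radical n / f) : ℤ) : ℂ) * ((n / radical n) * f : ℕ) := by
  set t := radical n with ht
  set s := n / t with hs
  have htdvd : t ∣ n := radical_dvd_self n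
  have htpos : 0 < t := Nat.pos_of_dvd_of_pos htdvd hn
  have hspos : 0 < s := Nat.div_pos (Nat.le_of_dvd hn htdvd) htpos
  have hst : s * t = n := Nat.div_mul_cancel htdvd
  refine Finset.sum_bij_ne_zero (fun e _ _ => e / s) ?_ ?_ ?_ ?_
  · intro e h1 h2
    obtain ⟨he, hedvd⟩ := Finset.mem_filter.mp h1
    obtain ⟨hen, _⟩ := Nat.mem_divisors.mp he
    have hsq : Squarefree (n / e) := by
      by_contra hc
      exact h2 (by rw [ArithmeticFunction.moebius_eq_zero_of_not_squarefree hc]; simp)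
    have hse : s ∣ e := div_radical_dvd hn.ne' hen hsq
    refine Finset.mem_filter.mpr ⟨Nat.mem_divisors.mpr ⟨?_, htpos.ne'⟩, ?_⟩
    · have h3 : s * (e / s) ∣ s * t := by
        rw [Nat.mul_div_cancel' hse, hst]; exact hen
      exact (Nat.mul_dvd_mul_iff_left hspos).mp h3
    · rw [Nat.mul_div_cancel' hse]; exact hedvd
  · intro e1 h11 h12 e2 h21 h22 heq
    have hs1 : s ∣ e1 := by
      obtain ⟨he, _⟩ := Finset.mem_filter.mp h11
      obtain ⟨hen, _⟩ := Nat.mem_divisors.mp he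
      refine div_radical_dvd hn.ne' hen ?_
      by_contra hc
      exact h12 (by rw [ArithmeticFunction.moebius_eq_zero_of_not_squarefree hc]; simp)
    have hs2 : s ∣ e2 := by
      obtain ⟨he, _⟩ := Finset.mem_filter.mp h21
      obtain ⟨hen, _⟩ := Nat.mem_divisors.mp he
      refine div_radical_dvd hn.ne' hen ?_
      by_contra hc
      exact h22 (by rw [ArithmeticFunction.moebius_eq_zero_of_not_squarefree hc]; simp)
    have heq' : e1 / s = e2 / s := heq
    rw [← Nat.mul_div_cancel' hs1, ← Nat.mul_div_cancel' hs2, heq']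
  · intro f hf hgf
    obtain ⟨hft, hsfm⟩ := Finset.mem_filter.mp hf
    obtain ⟨hfd, _⟩ := Nat.mem_divisors.mp hft
    have hmem : s * f ∈ n.divisors.filter (fun e => ((e : ℕ) : ℤ) ∣ m) := by
      refine Finset.mem_filter.mpr ⟨Nat.mem_divisors.mpr ⟨?_, hn.ne'⟩, hsfm⟩
      rw [← hst]; exact Nat.mul_dvd_mul_left s hfd
    have hq : n / (s * f) = t / f := by
      rw [← hst, Nat.mul_div_mul_left _ _ hspos]
    refine ⟨s * f, hmem, ?_, Nat.mul_div_cancel_left f hspos⟩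
    show ((ArithmeticFunction.moebius (n / (s * f)) : ℤ) : ℂ) * ((s * f : ℕ) : ℂ) ≠ 0
    rw [hq]
    exact hgf
  · intro e h1 h2
    obtain ⟨he, hedvd⟩ := Finset.mem_filter.mp h1
    obtain ⟨hen, _⟩ := Nat.mem_divisors.mp he
    have hsq : Squarefree (n / e) := by
      by_contra hc
      exact h2 (by rw [ArithmeticFunction.moebius_eq_zero_of_not_squarefree hc]; simp)
    have hse : s ∣ e := div_radical_dvd hn.ne' hen hsq
    have he' : s * (e / s) = e := Nat.mul_div_cancel' hse
    have hq : n / e = t / (e / s) := by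
      conv_lhs => rw [← he', ← hst]
      rw [Nat.mul_div_mul_left _ _ hspos]
    show ((ArithmeticFunction.moebius (n / e) : ℤ) : ℂ) * (e : ℂ)
        = ((ArithmeticFunction.moebius (t / (e / s)) : ℤ) : ℂ) * ((s * (e / s) : ℕ) : ℂ)
    rw [hq, he']


/-- Closed form for the Ramanujan sum `c_n(m) = Σ_{gcd(c,n)=1, 1≤c≤n} ζ^(mc)`:
it is `0` if `(n/rad n) ∤ m`, and `(-1)^(ω(n)-ω(d)) · (n/rad n) · φ(rad d)`
if `(n/rad n) ∣ m`, where `d = gcd(m/(n/rad n), n)`. -/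
theorem ramanujan_sum_closed_form (n : ℕ) (hn : 0 < n) (ζ : ℂ)
    (hζ : IsPrimitiveRoot ζ n) (m : ℤ) :
    ∑ c ∈ (Icc 1 n).filter (fun c => Nat.Coprime c n), ζ ^ (m * (c : ℤ)) =
      if ((n / radical n : ℕ) : ℤ) ∣ m then
        (-1 : ℂ) ^ (n.primeFactors.card -
            (Int.gcd (m / ((n / radical n : ℕ) : ℤ)) n).primeFactors.card) *
          ((n / radical n : ℕ) : ℂ) *
          (Nat.totient (radical (Int.gcd (m / ((n / radical n : ℕ) : ℤ)) n)) : ℂ)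
      else 0 := by
  rw [step1 n hn ζ hζ m, step2 n hn m]
  set t := radical n with ht
  set s := n / t with hs
  have htdvd : t ∣ n := radical_dvd_self n
  have htpos : 0 < t := Nat.pos_of_dvd_of_pos htdvd hn
  have hspos : 0 < s := Nat.div_pos (Nat.le_of_dvd hn htdvd) htpos
  have hst : s * t = n := Nat.div_mul_cancel htdvd
  have htsq : Squarefree t := squarefree_radical n
  by_cases hsm : ((s : ℕ) : ℤ) ∣ m
  · rw [if_pos hsm]
    set m' := m / (s : ℤ) with hm'def
    have hm : m = (s : ℤ) * m' := (Int.mul_ediv_cancel' hsm).symm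
    have hs0 : (s : ℤ) ≠ 0 := Int.natCast_ne_zero.mpr hspos.ne'
    set d := Int.gcd m' (n : ℤ) with hd_def
    have hdnat : d = Nat.gcd m'.natAbs n := by rw [hd_def, Int.gcd]; simp
    have hddvd : d ∣ n := by
      rw [hdnat]; exact Nat.gcd_dvd_right _ _
    have hd0 : d ≠ 0 := by
      rw [hdnat]; exact Nat.gcd_ne_zero_right hn.ne'
    set r := radical d with hr
    have hrd : r ∣ d := radical_dvd_self d
    have hrt : r ∣ t := by
      rw [hr, ht]
      exact Finset.prod_dvd_prod_of_subset _ _ _ (Nat.primeFactors_mono hddvd hn.ne')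
    have hrpos : 0 < r := Nat.pos_of_dvd_of_pos (dvd_trans hrt htdvd) hn
    have hcond : ∀ f, f ∣ t → (((s * f : ℕ) : ℤ) ∣ m ↔ f ∣ r) := by
      intro f hft
      have hcast : ((s * f : ℕ) : ℤ) = (s : ℤ) * (f : ℤ) := by push_cast; ring
      constructor
      · intro hdvd
        rw [hcast, hm] at hdvd
        have h1 : (f : ℤ) ∣ m' := (mul_dvd_mul_iff_left hs0).mp hdvd
        have h2 : f ∣ m'.natAbs := Int.natCast_dvd_natCast.mp (Int.dvd_natAbs.mpr h1)
        have h3 : f ∣ d := by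
          rw [hdnat]; exact Nat.dvd_gcd h2 (dvd_trans hft htdvd)
        have hfsq : Squarefree f := htsq.squarefree_of_dvd hft
        calc f = ∏ p ∈ f.primeFactors, p := (Nat.prod_primeFactors_of_squarefree hfsq).symm
          _ ∣ ∏ p ∈ d.primeFactors, p :=
              Finset.prod_dvd_prod_of_subset _ _ _ (Nat.primeFactors_mono h3 hd0)
      · intro hfr
        have h1 : f ∣ m'.natAbs :=
          dvd_trans hfr (dvd_trans hrd (by rw [hdnat]; exact Nat.gcd_dvd_left _ _))
        have h2 : (f : ℤ) ∣ m' := Int.dvd_natAbs.mp (Int.natCast_dvd_natCast.mpr h1)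
        rw [hcast, hm]
        exact mul_dvd_mul_left _ h2
    have hfilter : t.divisors.filter (fun f => ((s * f : ℕ) : ℤ) ∣ m) = r.divisors := by
      rw [Finset.filter_congr (fun f hf => hcond f (Nat.mem_divisors.mp hf).1),
        Nat.divisors_filter_dvd_of_dvd htpos.ne' hrt]
    rw [hfilter]
    set u := t / r with hu_def
    have hu : r * u = t := Nat.mul_div_cancel' hrt
    have htsq' : Squarefree (r * u) := by rw [hu]; exact htsq
    have hcop : Nat.Coprime r u := (Nat.squarefree_mul_iff.mp htsq').1
    have husq : Squarefree u := (Nat.squarefree_mul_iff.mp htsq').2.2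
    have hu0 : u ≠ 0 := by
      intro h
      rw [h, mul_zero] at hu
      exact htpos.ne' hu.symm
    have hmufact : ∀ f ∈ r.divisors, ArithmeticFunction.moebius (t / f)
        = ArithmeticFunction.moebius u * ArithmeticFunction.moebius (r / f) := by
      intro f hf
      obtain ⟨hfr, _⟩ := Nat.mem_divisors.mp hf
      have htf : t / f = u * (r / f) := by
        rw [← hu, mul_comm r u, Nat.mul_div_assoc u hfr]
      rw [htf]
      exact ArithmeticFunction.isMultiplicative_moebius.map_mul_of_coprime
        (hcop.symm.coprime_dvd_right (Nat.div_dvd_of_dvd hfr))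
    have hTZ : ∑ f ∈ r.divisors, ((ArithmeticFunction.moebius (r / f) : ℤ) : ℂ) * (f : ℂ)
        = (Nat.totient r : ℂ) := by
      have h0 := congrArg (fun z : ℤ => (z : ℂ)) (sum_moebius_div_mul r hrpos)
      push_cast at h0
      exact h0
    have hsum : ∑ f ∈ r.divisors,
          ((ArithmeticFunction.moebius (t / f) : ℤ) : ℂ) * ((s * f : ℕ) : ℂ)
        = ((ArithmeticFunction.moebius u : ℤ) : ℂ) * s * (Nat.totient r : ℂ) := by
      calc ∑ f ∈ r.divisors, ((ArithmeticFunction.moebius (t / f) : ℤ) : ℂ) * ((s * f : ℕ) : ℂ)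
          = ∑ f ∈ r.divisors, ((ArithmeticFunction.moebius u : ℤ) : ℂ) * s
              * (((ArithmeticFunction.moebius (r / f) : ℤ) : ℂ) * f) := by
            refine Finset.sum_congr rfl fun f hf => ?_
            rw [hmufact f hf]
            push_cast
            ring
        _ = ((ArithmeticFunction.moebius u : ℤ) : ℂ) * s
              * ∑ f ∈ r.divisors, ((ArithmeticFunction.moebius (r / f) : ℤ) : ℂ) * f := by
            rw [Finset.mul_sum]
        _ = ((ArithmeticFunction.moebius u : ℤ) : ℂ) * s * (Nat.totient r : ℂ) := by
            rw [hTZ]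
    have hcardu : u.primeFactors.card = n.primeFactors.card - d.primeFactors.card := by
      have h1 : t.primeFactors = n.primeFactors := primeFactors_radical n
      have h2 : r.primeFactors = d.primeFactors := primeFactors_radical d
      have h3 : t.primeFactors = r.primeFactors ∪ u.primeFactors := by
        rw [← hu, Nat.primeFactors_mul hrpos.ne' hu0]
      have h4 : Disjoint r.primeFactors u.primeFactors :=
        Nat.Coprime.disjoint_primeFactors hcop
      have h5 : t.primeFactors.card = r.primeFactors.card + u.primeFactors.card := by
        rw [h3, Finset.card_union_of_disjoint h4]
      have h6 : d.primeFactors.card ≤ n.primeFactors.card :=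
        Finset.card_le_card (Nat.primeFactors_mono hddvd hn.ne')
      have h1' := congrArg Finset.card h1
      have h2' := congrArg Finset.card h2
      omega
    have hmuu : ArithmeticFunction.moebius u
        = (-1 : ℤ) ^ (n.primeFactors.card - d.primeFactors.card) := by
      rw [ArithmeticFunction.moebius_apply_of_squarefree husq, ← hcardu]
      congr 1
      rw [← (ArithmeticFunction.cardDistinctFactors_eq_cardFactors_iff_squarefree hu0).mpr husq,
        ArithmeticFunction.cardDistinctFactors_apply]
      exact (List.card_toFinset _).symm
    rw [hsum, hmuu]
    push_cast
    ring
  · rw [if_neg hsm]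
    have hempty : t.divisors.filter (fun f => ((s * f : ℕ) : ℤ) ∣ m) = ∅ := by
      rw [Finset.filter_eq_empty_iff]
      intro f _ hdvd
      exact hsm (dvd_trans (by push_cast; exact dvd_mul_right _ _) hdvd)
    rw [hempty, Finset.sum_empty]
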